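/- arXiv:2001.09811 — 3 statements merged into one kernel-verified Lean document; each statement's English description precedes it below -/
import Mathlib

section
/- Let S₁ : E → F be an isometry between Hilbert spaces, R₁ : E → E an isometry and R₂ : E → G a co-isometry satisfying R₂ R₁ = 0 and R₁ R₁* + R₂* R₂ = id_E. Then the operator S : F → F ⊕ G defined in block form by S = (I − S₁S₁* + S₁R₁*S₁*, R₂S₁*)ᵀ is a unitary. -/
set_option maxHeartbeats 1000000 in
open ContinuousLinearMap in
/-- Given an isometry `S₁ : E → F`, an isometry `R₁ : E → E` and a co-isometry `R₂ : E → G`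
with `R₂ R₁ = 0` and `R₁ R₁* + R₂* R₂ = id_E`, the column operator
`S = (I − S₁S₁* + S₁R₁*S₁*, R₂S₁*)ᵀ : F → F ⊕ G` is a unitary. -/
theorem column_operator_unitary
    {E F G : Type*} [NormedAddCommGroup E] [InnerProductSpace ℂ E] [CompleteSpace E]
    [NormedAddCommGroup F] [InnerProductSpace ℂ F] [CompleteSpace F]
    [NormedAddCommGroup G] [InnerProductSpace ℂ G] [CompleteSpace G]
    (S₁ : E →L[ℂ] F) (hS₁ : (adjoint S₁) ∘L S₁ = 1)
    (R₁ : E →L[ℂ] E) (hR₁ : (adjoint R₁) ∘L R₁ = 1)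
    (R₂ : E →L[ℂ] G) (hR₂ : R₂ ∘L (adjoint R₂) = ContinuousLinearMap.id ℂ G)
    (hR₂R₁ : R₂ ∘L R₁ = 0)
    (hsum : R₁ ∘L (adjoint R₁) + (adjoint R₂) ∘L R₂ = 1)
    (S : F →L[ℂ] WithLp 2 (F × G))
    (hS : ∀ x : F, WithLp.equiv 2 (F × G) (S x) =
      ((ContinuousLinearMap.id ℂ F - S₁ ∘L adjoint S₁
          + S₁ ∘L (adjoint R₁) ∘L adjoint S₁) x,
       (R₂ ∘L adjoint S₁) x)) :
    (adjoint S) ∘L S = ContinuousLinearMap.id ℂ F ∧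
    S ∘L (adjoint S) = ContinuousLinearMap.id ℂ (WithLp 2 (F × G)) := by
  -- abbreviations
  set A : F →L[ℂ] F := ContinuousLinearMap.id ℂ F - S₁ ∘L adjoint S₁
      + S₁ ∘L (adjoint R₁) ∘L adjoint S₁ with hAdef
  set B : F →L[ℂ] G := R₂ ∘L adjoint S₁ with hBdef
  set A' : F →L[ℂ] F := ContinuousLinearMap.id ℂ F - S₁ ∘L adjoint S₁
      + S₁ ∘L R₁ ∘L adjoint S₁ with hA'def
  set B' : G →L[ℂ] F := S₁ ∘L adjoint R₂ with hB'def
  -- pointwise consequences of hypotheses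
  have h1 : ∀ a : E, adjoint S₁ (S₁ a) = a := fun a => by
    rw [← comp_apply, hS₁, ContinuousLinearMap.one_apply]
  have h2 : ∀ a : E, adjoint R₁ (R₁ a) = a := fun a => by
    rw [← comp_apply, hR₁, ContinuousLinearMap.one_apply]
  have h3 : ∀ g : G, R₂ (adjoint R₂ g) = g := fun g => by
    rw [← comp_apply, hR₂, ContinuousLinearMap.id_apply]
  have h4 : ∀ a : E, R₂ (R₁ a) = 0 := fun a => by
    rw [← comp_apply, hR₂R₁, zero_apply]
  have h5 : ∀ a : E, R₁ (adjoint R₁ a) + adjoint R₂ (R₂ a) = a := fun a => by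
    have := congrArg (fun (T : E →L[ℂ] E) => T a) hsum
    simpa using this
  have h6 : ∀ g : G, adjoint R₁ (adjoint R₂ g) = 0 := fun g => by
    have h0 : adjoint R₁ ∘L adjoint R₂ = 0 := by
      rw [← adjoint_comp, hR₂R₁, map_zero]
    rw [← comp_apply, h0, zero_apply]
  -- adjoints of the blocks
  have hA : adjoint A = A' := by
    rw [hAdef, hA'def, map_add, map_sub, adjoint_comp, adjoint_comp, adjoint_comp,
      adjoint_adjoint, adjoint_adjoint, adjoint_id, comp_assoc]
  have hB : adjoint B = B' := by
    rw [hBdef, hB'def, adjoint_comp, adjoint_adjoint]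
  -- the components of S
  have hfst : ∀ x : F, (S x).ofLp.1 = A x := fun x => congrArg Prod.fst (hS x)
  have hsnd : ∀ x : F, (S x).ofLp.2 = B x := fun x => congrArg Prod.snd (hS x)
  -- the candidate adjoint
  set T : WithLp 2 (F × G) →L[ℂ] F :=
    (A' ∘L ContinuousLinearMap.fst ℂ F G + B' ∘L ContinuousLinearMap.snd ℂ F G) ∘L
      (WithLp.prodContinuousLinearEquiv 2 ℂ F G).toContinuousLinearMap with hTdef
  have hT : ∀ z : WithLp 2 (F × G), T z = A' z.ofLp.1 + B' z.ofLp.2 := fun z => rfl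
  have hadj : T = adjoint S := by
    rw [eq_adjoint_iff]
    intro z x
    rw [hT, WithLp.prod_inner_apply, hfst, hsnd, inner_add_left, ← hA, ← hB,
      adjoint_inner_left, adjoint_inner_left]
  constructor
  · ext x
    rw [comp_apply, ← hadj, hT, hfst, hsnd]
    simp only [hAdef, hA'def, hBdef, hB'def, add_apply, comp_apply, sub_apply,
      ContinuousLinearMap.id_apply, map_add, map_sub, map_zero, h1, h2, h3, h4, h6,
      sub_zero, add_zero, zero_add, sub_self]
    have key : S₁ (R₁ (adjoint R₁ (adjoint S₁ x)))
        = S₁ (adjoint S₁ x) - S₁ (adjoint R₂ (R₂ (adjoint S₁ x))) := by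
      rw [eq_sub_iff_add_eq, ← map_add, h5]
    rw [key]
    abel
  · refine ContinuousLinearMap.ext fun z => ?_
    rw [comp_apply, ← hadj, ContinuousLinearMap.id_apply]
    apply (WithLp.equiv 2 (F × G)).injective
    apply Prod.ext
    · show (S (T z)).ofLp.1 = z.ofLp.1
      rw [hfst, hT]
      simp only [hAdef, hA'def, hBdef, hB'def, add_apply, comp_apply, sub_apply,
        ContinuousLinearMap.id_apply, map_add, map_sub, map_zero, h1, h2, h3, h4, h6,
        sub_zero, add_zero, zero_add, sub_self]
      abel
    · show (S (T z)).ofLp.2 = z.ofLp.2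
      rw [hsnd, hT]
      simp only [hAdef, hA'def, hBdef, hB'def, add_apply, comp_apply, sub_apply,
        ContinuousLinearMap.id_apply, map_add, map_sub, map_zero, h1, h2, h3, h4, h6,
        sub_zero, add_zero, zero_add, sub_self]
end

section
/- Let H be a separable Hilbert space, (a_k) an increasing quasicentral approximate unit of positive finite-rank operators with a₀ = 0 and ‖a_k‖ ≤ 1, f_k := (a_k − a_{k−1})^{1/2}, and (U_k) a sequence of partial isometries with pairwise orthogonal final ranges and U_k*U_k equal to the range projection of a_k. Then S := ∑_{k=1}^∞ U_k f_k converges in the strong-* topology and defines an isometry: S*S = id_H. -/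
set_option synthInstance.maxHeartbeats 1000000
set_option maxHeartbeats 2000000

section Helpers

variable {H : Type*} [NormedAddCommGroup H] [InnerProductSpace ℂ H]

local notation "⟪" x ", " y "⟫" => @inner ℂ _ _ x y

private lemma aux_orth_sum_sq (v : ℕ → H) (t : Finset ℕ)
    (h : ∀ j ∈ t, ∀ k ∈ t, j ≠ k → ⟪v j, v k⟫ = 0) :
    ‖∑ k ∈ t, v k‖ ^ 2 = ∑ k ∈ t, ‖v k‖ ^ 2 := by
  have key : ⟪∑ k ∈ t, v k, ∑ k ∈ t, v k⟫ = ∑ k ∈ t, ⟪v k, v k⟫ := by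
    rw [sum_inner]
    refine Finset.sum_congr rfl fun j hj => ?_
    rw [inner_sum, Finset.sum_eq_single_of_mem j hj]
    intro k hk hkj
    exact h j hj k hk (fun e => hkj (e.symm))
  have key2 := congrArg RCLike.re key
  rw [inner_self_eq_norm_sq, map_sum] at key2
  rw [key2]
  exact Finset.sum_congr rfl fun k _ => inner_self_eq_norm_sq (v k)

private lemma aux_summable [CompleteSpace H] (v : ℕ → H) (g : ℕ → ℝ) (hg : Summable g)
    (hb : ∀ t : Finset ℕ, ‖∑ k ∈ t, v k‖ ^ 2 ≤ ∑ k ∈ t, g k) : Summable v := by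
  rw [summable_iff_vanishing_norm]
  intro ε hε
  obtain ⟨s, hs⟩ := summable_iff_vanishing_norm.mp hg (ε ^ 2) (by positivity)
  refine ⟨s, fun t ht => ?_⟩
  have h1 := hb t
  have h2 := hs t ht
  rw [Real.norm_eq_abs] at h2
  have h3 : ‖∑ k ∈ t, v k‖ ^ 2 < ε ^ 2 := lt_of_le_of_lt h1 (lt_of_le_of_lt (le_abs_self _) h2)
  exact lt_of_pow_lt_pow_left₀ 2 hε.le h3

end Helpers

set_option synthInstance.maxHeartbeats 1000000
open ContinuousLinearMap in
/-- Given an increasing approximate unit `(a_k)` of positive finite-rank contractions with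
`a₀ = 0`, `f_k := (a_k − a_{k−1})^{1/2}` (here indexed so that `f k = (a_{k+1} − a_k)^{1/2}`),
and partial isometries `(U_k)` with pairwise orthogonal final ranges whose initial
projections are the range projections of the `a_k`, the series `S = ∑_k U_k f_k` converges
in the strong-* topology and defines an isometry `S*S = id`. -/
theorem sum_partial_isometries_isometry
    {H : Type*} [NormedAddCommGroup H] [InnerProductSpace ℂ H] [CompleteSpace H]
    (a : ℕ → (H →L[ℂ] H))
    (ha0 : a 0 = 0)
    (hapos : ∀ k, (a k).IsPositive)
    (hainc : ∀ k, (a (k + 1) - a k).IsPositive)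
    (hanorm : ∀ k, ‖a k‖ ≤ 1)
    (hafr : ∀ k, FiniteDimensional ℂ (LinearMap.range ((a k) : H →ₗ[ℂ] H)))
    (haunit : ∀ ξ : H, Filter.Tendsto (fun k => a k ξ) Filter.atTop (nhds ξ))
    (f : ℕ → (H →L[ℂ] H)) (hf : ∀ k, f k = CFC.sqrt (a (k + 1) - a k))
    (U : ℕ → (H →L[ℂ] H))
    -- each `U_k` is a partial isometry …
    (hpi : ∀ k, ((adjoint (U k)) ∘L U k) ∘L ((adjoint (U k)) ∘L U k) = (adjoint (U k)) ∘L U k)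
    (hpisa : ∀ k, IsSelfAdjoint ((adjoint (U k)) ∘L U k))
    -- … whose initial projection is the range projection of `a_{k+1}` …
    (hinit : ∀ k, LinearMap.range (((adjoint (U k)) ∘L U k) : H →ₗ[ℂ] H) =
      LinearMap.range ((a (k + 1)) : H →ₗ[ℂ] H))
    -- … and whose final projections are pairwise orthogonal
    (hfinal : ∀ j k, j ≠ k →
      (U j ∘L adjoint (U j)) ∘L (U k ∘L adjoint (U k)) = 0) :
    ∃ S : H →L[ℂ] H,
      (∀ ξ : H, HasSum (fun k : ℕ => U k (f k ξ)) (S ξ)) ∧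
      (∀ ξ : H, HasSum (fun k : ℕ => f k ((adjoint (U k)) ξ)) ((adjoint S) ξ)) ∧
      (adjoint S) ∘L S = 1 := by
  classical
  -- abbreviations
  set p : ℕ → (H →L[ℂ] H) := fun k => (adjoint (U k)) ∘L U k with hp
  set q : ℕ → (H →L[ℂ] H) := fun k => U k ∘L adjoint (U k) with hq
  -- basic facts about `f`
  have hfnn : ∀ k, (0 : H →L[ℂ] H) ≤ f k := fun k => (hf k) ▸ CFC.sqrt_nonneg (a (k + 1) - a k)
  have hfP : ∀ k, (f k).IsPositive := fun k =>
    (ContinuousLinearMap.nonneg_iff_isPositive _).mp (hfnn k)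
  have hfsa : ∀ k, adjoint (f k) = f k := fun k =>
    ContinuousLinearMap.isSelfAdjoint_iff'.mp (hfP k).isSelfAdjoint
  have hfsq : ∀ k, f k ∘L f k = a (k + 1) - a k := by
    intro k
    have h0 : (0 : H →L[ℂ] H) ≤ a (k + 1) - a k :=
      (ContinuousLinearMap.nonneg_iff_isPositive _).mpr (hainc k)
    have h1 : (CFC.sqrt (a (k + 1) - a k)) ^ 2 = a (k + 1) - a k := CFC.sq_sqrt _ h0
    have h2 : f k ∘L f k = (f k) ^ 2 := rfl
    rw [h2, hf k, h1]
  -- telescoping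
  have hsumfsq : ∀ n, ∑ k ∈ Finset.range n, (f k ∘L f k) = a n := by
    intro n
    induction n with
    | zero => simp [ha0]
    | succ n ih => rw [Finset.sum_range_succ, ih, hfsq]; abel
  -- ‖f k ξ‖²
  have hff : ∀ k (ξ : H), ‖f k ξ‖ ^ 2 =
      RCLike.re (inner (𝕜 := ℂ) ((f k ∘L f k) ξ) ξ) := by
    intro k ξ
    have h1 : inner (𝕜 := ℂ) ((f k ∘L f k) ξ) ξ = inner (𝕜 := ℂ) (f k ξ) (f k ξ) := by
      have h2 := adjoint_inner_left (f k) ξ (f k ξ)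
      rw [hfsa k] at h2
      simpa using h2
    rw [h1, inner_self_eq_norm_sq]
  -- partial sums of ‖f k ξ‖² are ≤ ‖ξ‖²
  have hsumle : ∀ (ξ : H) (t : Finset ℕ), ∑ k ∈ t, ‖f k ξ‖ ^ 2 ≤ ‖ξ‖ ^ 2 := by
    intro ξ t
    obtain ⟨N, hN⟩ : ∃ N, t ⊆ Finset.range N :=
      ⟨(t.sup id) + 1, fun k hk => Finset.mem_range.mpr
        (Nat.lt_succ_of_le (Finset.le_sup (f := id) hk))⟩
    have step1 : ∑ k ∈ t, ‖f k ξ‖ ^ 2 ≤ ∑ k ∈ Finset.range N, ‖f k ξ‖ ^ 2 :=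
      Finset.sum_le_sum_of_subset_of_nonneg hN (fun k _ _ => by positivity)
    have step2 : ∑ k ∈ Finset.range N, ‖f k ξ‖ ^ 2 =
        RCLike.re (inner (𝕜 := ℂ) (a N ξ) ξ) := by
      have h1 : ∀ k ∈ Finset.range N, ‖f k ξ‖ ^ 2 =
          RCLike.re (inner (𝕜 := ℂ) ((f k ∘L f k) ξ) ξ) := fun k _ => hff k ξ
      rw [Finset.sum_congr rfl h1, ← map_sum, ← sum_inner, ← hsumfsq N]
      congr 1
      rw [ContinuousLinearMap.sum_apply]
    have step3 : RCLike.re (inner (𝕜 := ℂ) (a N ξ) ξ) ≤ ‖ξ‖ ^ 2 := by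
      have h2 : RCLike.re (inner (𝕜 := ℂ) (a N ξ) ξ) ≤ ‖(inner (𝕜 := ℂ) (a N ξ) ξ)‖ :=
        RCLike.re_le_norm _
      have h3 : ‖(inner (𝕜 := ℂ) (a N ξ) ξ)‖ ≤ ‖a N ξ‖ * ‖ξ‖ := norm_inner_le_norm _ _
      have h4 : ‖a N ξ‖ ≤ ‖a N‖ * ‖ξ‖ := (a N).le_opNorm ξ
      have h5 : ‖a N‖ ≤ 1 := hanorm N
      nlinarith [norm_nonneg ξ, norm_nonneg (a N ξ)]
    linarith
  -- projection identities
  have hpp : ∀ k (ξ : H), p k (p k ξ) = p k ξ := by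
    intro k ξ
    have := DFunLike.congr_fun (hpi k) ξ
    simpa [hp] using this
  have hUp : ∀ k (ξ : H), U k (p k ξ) = U k ξ := by
    intro k ξ
    have hz : p k (ξ - p k ξ) = 0 := by
      rw [map_sub, hpp k ξ, sub_self]
    have h1 : inner (𝕜 := ℂ) (U k (ξ - p k ξ)) (U k (ξ - p k ξ)) = 0 := by
      have h2 := adjoint_inner_left (U k) (ξ - p k ξ) (U k (ξ - p k ξ))
      have h3 : adjoint (U k) (U k (ξ - p k ξ)) = p k (ξ - p k ξ) := rfl
      rw [h3, hz] at h2
      rw [← h2, inner_zero_left]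
    have h0 : U k (ξ - p k ξ) = 0 := inner_self_eq_zero.mp h1
    rw [map_sub, sub_eq_zero] at h0
    exact h0.symm
  have hUpOp : ∀ k, U k ∘L p k = U k := by
    intro k
    ext ξ
    exact hUp k ξ
  have hpadj : ∀ k, adjoint (p k) = p k := fun k =>
    ContinuousLinearMap.isSelfAdjoint_iff'.mp (hpisa k)
  have hpUstar : ∀ k, p k ∘L adjoint (U k) = adjoint (U k) := by
    intro k
    have h1 := congrArg adjoint (hUpOp k)
    rwa [adjoint_comp, hpadj] at h1
  have hqadj : ∀ k, adjoint (q k) = q k := by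
    intro k
    rw [hq]
    simp [adjoint_comp, adjoint_adjoint]
  have hqU : ∀ k (ξ : H), q k (U k ξ) = U k ξ := by
    intro k ξ
    have : q k (U k ξ) = U k (p k ξ) := rfl
    rw [this, hUp]
  have hqq : ∀ k (ξ : H), q k (q k ξ) = q k ξ := by
    intro k ξ
    exact hqU k (adjoint (U k) ξ)
  -- pairwise orthogonality of the ranges of `q`
  have hqorth : ∀ j k, j ≠ k → ∀ (ξ η : H),
      inner (𝕜 := ℂ) (q j ξ) (q k η) = 0 := by
    intro j k hjk ξ η
    have h1 := adjoint_inner_left (q j) (q k η) ξ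
    rw [hqadj j] at h1
    have h2 : q j (q k η) = 0 := by
      have := DFunLike.congr_fun (hfinal j k hjk) η
      simpa [hq] using this
    rw [h2, inner_zero_right] at h1
    exact h1
  -- orthogonality of the summands
  have hVorth : ∀ (ξ η : H) (j k : ℕ), j ≠ k →
      inner (𝕜 := ℂ) (U j (f j ξ)) (U k (f k η)) = 0 := by
    intro ξ η j k hjk
    rw [← hqU j (f j ξ), ← hqU k (f k η)]
    exact hqorth j k hjk _ _
  -- kernel inclusion
  have hker : ∀ k (η : H), a (k + 1) η = 0 → f k η = 0 := by
    intro k η hη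
    have h1 : RCLike.re (inner (𝕜 := ℂ) ((a (k+1) - a k) η) η) ≤ 0 := by
      have he : inner (𝕜 := ℂ) ((a (k+1) - a k) η) η = - inner (𝕜 := ℂ) (a k η) η := by
        rw [ContinuousLinearMap.sub_apply, inner_sub_left, hη, inner_zero_left, zero_sub]
      rw [he, map_neg, neg_nonpos]
      exact (hapos k).re_inner_nonneg_left η
    have h2 : 0 ≤ RCLike.re (inner (𝕜 := ℂ) ((a (k+1) - a k) η) η) :=
      (hainc k).re_inner_nonneg_left η
    have h3 : ‖f k η‖ ^ 2 = 0 := by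
      rw [hff k η, hfsq k]
      linarith
    have h4 : ‖f k η‖ = 0 := by
      nlinarith [norm_nonneg (f k η)]
    exact norm_eq_zero.mp h4
  -- range of `f k` lands in range of `a (k+1)`
  have hrange : ∀ k (ξ : H), f k ξ ∈ LinearMap.range ((a (k + 1)) : H →ₗ[ℂ] H) := by
    intro k ξ
    haveI : FiniteDimensional ℂ (LinearMap.range ((a (k+1)) : H →ₗ[ℂ] H)) := hafr (k+1)
    haveI : CompleteSpace (LinearMap.range ((a (k+1)) : H →ₗ[ℂ] H)) :=
      FiniteDimensional.complete ℂ _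
    rw [← Submodule.orthogonal_orthogonal (LinearMap.range ((a (k+1)) : H →ₗ[ℂ] H))]
    refine (Submodule.mem_orthogonal _ _).mpr ?_
    intro η hη
    have haη : a (k + 1) η = 0 := by
      have h2 := (Submodule.mem_orthogonal _ _).mp hη (a (k+1) (a (k+1) η))
        ⟨a (k+1) η, rfl⟩
      have hsa : adjoint (a (k+1)) = a (k+1) :=
        ContinuousLinearMap.isSelfAdjoint_iff'.mp (hapos (k+1)).isSelfAdjoint
      have h3 := adjoint_inner_left (a (k+1)) η (a (k+1) η)
      rw [hsa] at h3
      rw [h3] at h2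
      exact inner_self_eq_zero.mp h2
    have hfη : f k η = 0 := hker k η haη
    have h5 := adjoint_inner_right (f k) η ξ
    rw [hfsa k] at h5
    rw [h5, hfη, inner_zero_left]
  -- p k fixes range of f k
  have hpf : ∀ k (ξ : H), p k (f k ξ) = f k ξ := by
    intro k ξ
    have h1 := hrange k ξ
    rw [← hinit k] at h1
    obtain ⟨y, hy⟩ := h1
    have hy' : p k y = f k ξ := hy
    rw [← hy', hpp]
  -- norm preservation on range of f k
  have hVnorm : ∀ k (ξ : H), ‖U k (f k ξ)‖ ^ 2 = ‖f k ξ‖ ^ 2 := by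
    intro k ξ
    have h1 := adjoint_inner_left (U k) (f k ξ) (U k (f k ξ))
    have h2 : adjoint (U k) (U k (f k ξ)) = p k (f k ξ) := rfl
    rw [h2, hpf] at h1
    have h3 := congrArg RCLike.re h1
    rw [inner_self_eq_norm_sq, inner_self_eq_norm_sq] at h3
    exact h3.symm
  -- summability of the series defining S
  have hgsummable : ∀ ξ : H, Summable (fun k => ‖f k ξ‖ ^ 2) := by
    intro ξ
    exact summable_of_sum_range_le (fun k => by positivity)
      (fun n => hsumle ξ (Finset.range n))
  have horthsum : ∀ (ξ : H) (t : Finset ℕ),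
      ‖∑ k ∈ t, U k (f k ξ)‖ ^ 2 = ∑ k ∈ t, ‖f k ξ‖ ^ 2 := by
    intro ξ t
    rw [aux_orth_sum_sq _ t (fun j _ k _ hjk => hVorth ξ ξ j k hjk)]
    exact Finset.sum_congr rfl fun k _ => hVnorm k ξ
  have hsummV : ∀ ξ : H, Summable (fun k => U k (f k ξ)) := by
    intro ξ
    exact aux_summable _ _ (hgsummable ξ) (fun t => (horthsum ξ t).le)
  -- definition of S
  have hnormbound : ∀ ξ : H, ‖∑' k, U k (f k ξ)‖ ≤ 1 * ‖ξ‖ := by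
    intro ξ
    have h1 : Filter.Tendsto (fun t : Finset ℕ => ‖∑ k ∈ t, U k (f k ξ)‖)
        Filter.atTop (nhds ‖∑' k, U k (f k ξ)‖) := (hsummV ξ).hasSum.norm
    refine le_of_tendsto h1 (Filter.Eventually.of_forall fun t => ?_)
    have h2 : ‖∑ k ∈ t, U k (f k ξ)‖ ^ 2 ≤ ‖ξ‖ ^ 2 := by
      rw [horthsum ξ t]; exact hsumle ξ t
    rw [one_mul]
    nlinarith [norm_nonneg (∑ k ∈ t, U k (f k ξ)), norm_nonneg ξ]
  set Tlin : H →ₗ[ℂ] H :=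
    { toFun := fun ξ => ∑' k, U k (f k ξ)
      map_add' := by
        intro ξ η
        have h1 : HasSum (fun k => U k (f k (ξ + η)))
            ((∑' k, U k (f k ξ)) + ∑' k, U k (f k η)) := by
          have := (hsummV ξ).hasSum.add (hsummV η).hasSum
          refine HasSum.congr_fun this fun k => ?_
          simp [map_add]
        exact h1.tsum_eq
      map_smul' := by
        intro c ξ
        have h1 : HasSum (fun k => U k (f k (c • ξ))) (c • ∑' k, U k (f k ξ)) := by
          have := (hsummV ξ).hasSum.const_smul c
          refine HasSum.congr_fun this fun k => ?_
          simp [map_smul]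
        simpa using h1.tsum_eq } with hTlin
  set S : H →L[ℂ] H := LinearMap.mkContinuous Tlin 1 hnormbound with hSdef
  have hS : ∀ ξ : H, HasSum (fun k : ℕ => U k (f k ξ)) (S ξ) := by
    intro ξ
    have : S ξ = ∑' k, U k (f k ξ) := rfl
    rw [this]
    exact (hsummV ξ).hasSum
  -- norm identity for S
  have hVsq : ∀ ξ : H, HasSum (fun k => ‖f k ξ‖ ^ 2) (‖S ξ‖ ^ 2) := by
    intro ξ
    have h2 : Filter.Tendsto (fun t : Finset ℕ => ‖∑ k ∈ t, U k (f k ξ)‖ ^ 2)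
        Filter.atTop (nhds (‖S ξ‖ ^ 2)) := (hS ξ).norm.pow 2
    have h3 : (fun t : Finset ℕ => ‖∑ k ∈ t, U k (f k ξ)‖ ^ 2) =
        fun t : Finset ℕ => ∑ k ∈ t, ‖f k ξ‖ ^ 2 := funext fun t => horthsum ξ t
    rw [h3] at h2
    exact h2
  have hfsqsum : ∀ ξ : H, HasSum (fun k => ‖f k ξ‖ ^ 2) (‖ξ‖ ^ 2) := by
    intro ξ
    rw [hasSum_iff_tendsto_nat_of_nonneg (fun k => by positivity)]
    have h1 : (fun n => ∑ k ∈ Finset.range n, ‖f k ξ‖ ^ 2) =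
        fun n => RCLike.re (inner (𝕜 := ℂ) (a n ξ) ξ) := by
      funext n
      have h2 : ∀ k ∈ Finset.range n, ‖f k ξ‖ ^ 2 =
          RCLike.re (inner (𝕜 := ℂ) ((f k ∘L f k) ξ) ξ) := fun k _ => hff k ξ
      rw [Finset.sum_congr rfl h2, ← map_sum, ← sum_inner, ← hsumfsq n]
      congr 1
      rw [ContinuousLinearMap.sum_apply]
    rw [h1]
    have h3 : Filter.Tendsto (fun n => inner (𝕜 := ℂ) (a n ξ) ξ) Filter.atTop
        (nhds (inner (𝕜 := ℂ) ξ ξ)) := (haunit ξ).inner tendsto_const_nhds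
    have h4 := (RCLike.continuous_re.tendsto _).comp h3
    rw [inner_self_eq_norm_sq] at h4
    exact h4
  have hSnorm : ∀ ξ : H, ‖S ξ‖ ^ 2 = ‖ξ‖ ^ 2 := fun ξ => (hVsq ξ).unique (hfsqsum ξ)
  -- summability of the adjoint series
  have hUadnorm : ∀ k (ξ : H), ‖adjoint (U k) ξ‖ ^ 2 = ‖q k ξ‖ ^ 2 := by
    intro k ξ
    have h1 := adjoint_inner_right (U k) (adjoint (U k) ξ) ξ
    -- ⟪U†ξ, U†ξ⟫ = ⟪U (U†ξ), ξ⟫ = ⟪q ξ, ξ⟫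
    have h2 : U k (adjoint (U k) ξ) = q k ξ := rfl
    rw [h2] at h1
    have h3 := adjoint_inner_right (q k) (q k ξ) ξ
    rw [hqadj k, hqq k ξ] at h3
    have h4 : inner (𝕜 := ℂ) (adjoint (U k) ξ) (adjoint (U k) ξ)
        = inner (𝕜 := ℂ) (q k ξ) (q k ξ) := by rw [h1, ← h3]
    have h5 := congrArg RCLike.re h4
    rwa [inner_self_eq_norm_sq, inner_self_eq_norm_sq] at h5
  have hqsumle : ∀ (ξ : H) (t : Finset ℕ), ∑ k ∈ t, ‖q k ξ‖ ^ 2 ≤ ‖ξ‖ ^ 2 := by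
    intro ξ t
    have h1 : ∑ k ∈ t, ‖q k ξ‖ ^ 2 = ‖∑ k ∈ t, q k ξ‖ ^ 2 :=
      (aux_orth_sum_sq _ t (fun j _ k _ hjk => hqorth j k hjk ξ ξ)).symm
    have h2 : ∀ k ∈ t, ‖q k ξ‖ ^ 2 = RCLike.re (inner (𝕜 := ℂ) (q k ξ) ξ) := by
      intro k _
      have h3 := adjoint_inner_right (q k) (q k ξ) ξ
      rw [hqadj k, hqq k ξ] at h3
      have h5 := congrArg RCLike.re h3
      rwa [inner_self_eq_norm_sq] at h5
    have h6 : ∑ k ∈ t, ‖q k ξ‖ ^ 2 = RCLike.re (inner (𝕜 := ℂ) (∑ k ∈ t, q k ξ) ξ) := by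
      rw [Finset.sum_congr rfl h2, ← map_sum, ← sum_inner]
    have h7 : RCLike.re (inner (𝕜 := ℂ) (∑ k ∈ t, q k ξ) ξ) ≤ ‖∑ k ∈ t, q k ξ‖ * ‖ξ‖ :=
      (RCLike.re_le_norm _).trans (norm_inner_le_norm _ _)
    nlinarith [norm_nonneg (∑ k ∈ t, q k ξ), norm_nonneg ξ, h1 ▸ (h6 ▸ h7)]
  have hqsummable : ∀ ξ : H, Summable (fun k => ‖adjoint (U k) ξ‖ ^ 2) := by
    intro ξ
    refine summable_of_sum_range_le (c := ‖ξ‖ ^ 2) (fun k => by positivity) (fun n => ?_)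
    calc ∑ k ∈ Finset.range n, ‖adjoint (U k) ξ‖ ^ 2
        = ∑ k ∈ Finset.range n, ‖q k ξ‖ ^ 2 :=
          Finset.sum_congr rfl fun k _ => hUadnorm k ξ
      _ ≤ ‖ξ‖ ^ 2 := hqsumle ξ _
  have hWbound : ∀ (ξ : H) (t : Finset ℕ),
      ‖∑ k ∈ t, f k (adjoint (U k) ξ)‖ ^ 2 ≤ ∑ k ∈ t, ‖adjoint (U k) ξ‖ ^ 2 := by
    intro ξ t
    set ζ := ∑ k ∈ t, f k (adjoint (U k) ξ) with hζ
    have h1 : ‖ζ‖ ^ 2 = RCLike.re (inner (𝕜 := ℂ) ζ ζ) := (inner_self_eq_norm_sq ζ).symm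
    have h2 : inner (𝕜 := ℂ) ζ ζ = ∑ k ∈ t, inner (𝕜 := ℂ) (f k (adjoint (U k) ξ)) ζ := by
      rw [hζ, sum_inner]
    have h3 : ∀ k ∈ t, RCLike.re (inner (𝕜 := ℂ) (f k (adjoint (U k) ξ)) ζ) ≤
        ‖adjoint (U k) ξ‖ * ‖f k ζ‖ := by
      intro k _
      have h4 := adjoint_inner_left (f k) ζ (adjoint (U k) ξ)
      rw [hfsa k] at h4
      calc RCLike.re (inner (𝕜 := ℂ) (f k (adjoint (U k) ξ)) ζ)
          = RCLike.re (inner (𝕜 := ℂ) (adjoint (U k) ξ) (f k ζ)) := by rw [h4]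
        _ ≤ ‖(inner (𝕜 := ℂ) (adjoint (U k) ξ) (f k ζ))‖ := RCLike.re_le_norm _
        _ ≤ ‖adjoint (U k) ξ‖ * ‖f k ζ‖ := norm_inner_le_norm _ _
    have h5 : ‖ζ‖ ^ 2 ≤ ∑ k ∈ t, ‖adjoint (U k) ξ‖ * ‖f k ζ‖ := by
      rw [h1, h2, map_sum]
      exact Finset.sum_le_sum h3
    have h6 : (∑ k ∈ t, ‖adjoint (U k) ξ‖ * ‖f k ζ‖) ^ 2 ≤
        (∑ k ∈ t, ‖adjoint (U k) ξ‖ ^ 2) * (∑ k ∈ t, ‖f k ζ‖ ^ 2) :=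
      Finset.sum_mul_sq_le_sq_mul_sq t _ _
    have h7 : ∑ k ∈ t, ‖f k ζ‖ ^ 2 ≤ ‖ζ‖ ^ 2 := hsumle ζ t
    -- conclude: ‖ζ‖² ≤ A where A = ∑ ‖U†ξ‖²
    set A := ∑ k ∈ t, ‖adjoint (U k) ξ‖ ^ 2 with hA
    have hAnn : 0 ≤ A := Finset.sum_nonneg fun k _ => by positivity
    by_cases hz : ‖ζ‖ = 0
    · rw [hz]; simpa using hAnn
    · have hzpos : 0 < ‖ζ‖ := lt_of_le_of_ne (norm_nonneg ζ) (Ne.symm hz)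
      have hCSnn : 0 ≤ ∑ k ∈ t, ‖adjoint (U k) ξ‖ * ‖f k ζ‖ :=
        Finset.sum_nonneg fun k _ => mul_nonneg (norm_nonneg _) (norm_nonneg _)
      nlinarith [sq_nonneg (‖ζ‖ ^ 2), mul_pos hzpos hzpos]
  have hsummW : ∀ ξ : H, Summable (fun k => f k (adjoint (U k) ξ)) := by
    intro ξ
    exact aux_summable _ _ (hqsummable ξ) (hWbound ξ)
  -- identify the sum of the adjoint series with `adjoint S`
  have hAdj : ∀ ξ : H, HasSum (fun k : ℕ => f k (adjoint (U k) ξ)) (adjoint S ξ) := by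
    intro ξ
    have hx : HasSum (fun k => f k (adjoint (U k) ξ)) (∑' k, f k (adjoint (U k) ξ)) :=
      (hsummW ξ).hasSum
    suffices h : (∑' k, f k (adjoint (U k) ξ)) = adjoint S ξ by rw [← h]; exact hx
    refine ext_inner_left ℂ (fun η => ?_)
    have h1 : HasSum (fun k => inner (𝕜 := ℂ) η (f k (adjoint (U k) ξ)))
        (inner (𝕜 := ℂ) η (∑' k, f k (adjoint (U k) ξ))) := hx.mapL (innerSL ℂ η)
    have h2 : ∀ k, inner (𝕜 := ℂ) η (f k (adjoint (U k) ξ)) =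
        inner (𝕜 := ℂ) (U k (f k η)) ξ := by
      intro k
      have h3 := adjoint_inner_right (f k) η (adjoint (U k) ξ)
      rw [hfsa k] at h3
      rw [h3]
      exact adjoint_inner_right (U k) (f k η) ξ
    have h4 : HasSum (fun k => inner (𝕜 := ℂ) (U k (f k η)) ξ)
        (inner (𝕜 := ℂ) (S η) ξ) := by
      have h5 : HasSum (fun k => inner (𝕜 := ℂ) ξ (U k (f k η)))
          (inner (𝕜 := ℂ) ξ (S η)) := (hS η).mapL (innerSL ℂ ξ)
      have h6 := h5.map (starRingEnd ℂ) (by continuity)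
      simp only [Function.comp_def, inner_conj_symm] at h6
      exact h6
    have h1' : HasSum (fun k => inner (𝕜 := ℂ) (U k (f k η)) ξ)
        (inner (𝕜 := ℂ) η (∑' k, f k (adjoint (U k) ξ))) := by
      refine HasSum.congr_fun h1 fun k => ?_
      exact (h2 k).symm
    have h8 : inner (𝕜 := ℂ) η (∑' k, f k (adjoint (U k) ξ)) =
        inner (𝕜 := ℂ) (S η) ξ := h1'.unique h4
    rw [h8, adjoint_inner_right]
  -- the isometry identity
  have hiso : ∀ ξ : H, inner (𝕜 := ℂ) (S ξ) (S ξ) = inner (𝕜 := ℂ) ξ ξ := by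
    intro ξ
    rw [inner_self_eq_norm_sq_to_K, inner_self_eq_norm_sq_to_K]
    norm_cast
    exact_mod_cast hSnorm ξ
  have hfinal2 : adjoint S ∘L S = 1 := by
    rw [← sub_eq_zero]
    have hz : ∀ ξ : H, inner (𝕜 := ℂ) ((adjoint S ∘L S - 1) ξ) ξ = 0 := by
      intro ξ
      have h1 : inner (𝕜 := ℂ) ((adjoint S ∘L S) ξ) ξ = inner (𝕜 := ℂ) (S ξ) (S ξ) := by
        rw [ContinuousLinearMap.comp_apply]
        exact adjoint_inner_left S ξ (S ξ)
      rw [ContinuousLinearMap.sub_apply, inner_sub_left, h1, hiso ξ,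
        ContinuousLinearMap.one_apply, sub_self]
    have h2 : ((adjoint S ∘L S - 1 : H →L[ℂ] H) : H →ₗ[ℂ] H) = 0 := by
      refine (inner_map_self_eq_zero _).mp ?_
      intro x
      exact hz x
    apply ContinuousLinearMap.coe_injective
    rw [h2]
    rfl
  exact ⟨S, hS, hAdj, hfinal2⟩
end

section
/- Let (f_k) be a sequence of positive contractions on a Hilbert space with ∑_k f_k² = 1 strictly (strongly), and let b be a bounded operator with ‖[b, f_k]‖ ≤ ε/2^k for all k ≥ 1. Then ‖b − ∑_{k=1}^∞ f_k b f_k‖ ≤ ε, where the series converges strongly. -/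
open ContinuousLinearMap in
/-- If `(f_k)` are positive contractions with `∑_k f_k² = 1` strongly and
`‖[b, f_k]‖ ≤ ε/2^k`, then `‖b − ∑_k f_k b f_k‖ ≤ ε`, where the series `∑_k f_k b f_k`
converges strongly. (Here the sequence is indexed so that `f k` is the `(k+1)`-st term.) -/
theorem quasicentral_sandwich_estimate
    {H : Type*} [NormedAddCommGroup H] [InnerProductSpace ℂ H] [CompleteSpace H]
    (f : ℕ → (H →L[ℂ] H))
    (hfpos : ∀ k, (f k).IsPositive)
    (hfnorm : ∀ k, ‖f k‖ ≤ 1)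
    (hfsum : ∀ ξ : H, HasSum (fun k : ℕ => f k (f k ξ)) ξ)
    (b : H →L[ℂ] H) (ε : ℝ) (hε : 0 ≤ ε)
    (hcomm : ∀ k : ℕ, ‖b ∘L f k - f k ∘L b‖ ≤ ε / 2 ^ (k + 1)) :
    ∃ c : H →L[ℂ] H,
      (∀ ξ : H, HasSum (fun k : ℕ => f k (b (f k ξ))) (c ξ)) ∧
      ‖b - c‖ ≤ ε := by
  set g : ℕ → (H →L[ℂ] H) := fun k => f k ∘L (b ∘L f k - f k ∘L b) with hg
  have hgnorm : ∀ k, ‖g k‖ ≤ ε / 2 ^ (k + 1) := by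
    intro k
    calc ‖g k‖ ≤ ‖f k‖ * ‖b ∘L f k - f k ∘L b‖ := opNorm_comp_le _ _
      _ ≤ 1 * (ε / 2 ^ (k + 1)) := by
          apply mul_le_mul (hfnorm k) (hcomm k) (norm_nonneg _)
          exact zero_le_one
      _ = ε / 2 ^ (k + 1) := one_mul _
  have hgeo : Summable (fun k : ℕ => ε / 2 ^ (k + 1)) := by
    simpa [pow_succ, div_div, mul_comm] using summable_geometric_two' ε
  have hns : Summable (fun k => ‖g k‖) :=
    Summable.of_nonneg_of_le (fun k => norm_nonneg _) hgnorm hgeo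
  have hsummable : Summable g := hns.of_norm
  have hgsum := hsummable.hasSum
  refine ⟨b + ∑' k, g k, ?_, ?_⟩
  · intro ξ
    have h1 : HasSum (fun k => g k ξ) ((∑' k, g k) ξ) :=
      hgsum.mapL (ContinuousLinearMap.apply ℂ H ξ)
    have h2 := hfsum (b ξ)
    have h3 := h1.add h2
    have heq : (fun k => g k ξ + f k (f k (b ξ))) = fun k => f k (b (f k ξ)) := by
      funext k
      simp [hg]
    rw [heq] at h3
    convert h3 using 1
    simp [add_comm]
  · have : b - (b + ∑' k, g k) = -(∑' k, g k) := by abel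
    rw [this, norm_neg]
    calc ‖∑' k, g k‖ ≤ ∑' k, ‖g k‖ := norm_tsum_le_tsum_norm hns
      _ ≤ ∑' k, ε / 2 ^ (k + 1) := by
          apply Summable.tsum_le_tsum hgnorm hns hgeo
      _ = ∑' k : ℕ, ε / 2 / 2 ^ k := by
          apply tsum_congr; intro k; rw [pow_succ, div_div, mul_comm]
      _ = ε := tsum_geometric_two' ε
end
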